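/- Let ρ₁, ρ₂ > 0. For every z ∈ (−1,1), θ ∈ ℝ, and (u,v) ∈ ℝ², the two vectors of ℝ⁴ given by V_L = (ρ₁, 0, ρ₂·u, ρ₂·v) and V_H = (−(z²/(2√(1−z²)))(u cos θ + v sin θ), (√(1−z²)/2)(−u sin θ + v cos θ), (√(1−z²)/2) cos θ, (√(1−z²)/2) sin θ) are linearly independent over ℝ. (This shows the b-coupled spin-oscillator has no singular points of rank 1.) -/

import Mathlib

open Real

/-- In the cylindrical chart, the component vectors of `dL` and `dH` of the
b-coupled spin-oscillator (in the coframe `(dz/z, dθ, du, dv)`) are linearly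
independent at every point with `z ∈ (−1,1)`: the system has no rank-1
singular points. -/
theorem bCSO_no_rank_one_points (ρ₁ ρ₂ : ℝ) (hρ₁ : 0 < ρ₁) (hρ₂ : 0 < ρ₂)
    (z θ u v : ℝ) (hz : z ∈ Set.Ioo (-1 : ℝ) 1) :
    LinearIndependent ℝ
      ![![ρ₁, 0, ρ₂ * u, ρ₂ * v],
        ![-(z ^ 2 / (2 * Real.sqrt (1 - z ^ 2))) * (u * Real.cos θ + v * Real.sin θ),
          (Real.sqrt (1 - z ^ 2) / 2) * (-u * Real.sin θ + v * Real.cos θ),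
          (Real.sqrt (1 - z ^ 2) / 2) * Real.cos θ,
          (Real.sqrt (1 - z ^ 2) / 2) * Real.sin θ]] := by
  obtain ⟨hz1, hz2⟩ := hz
  have h1z : (0:ℝ) < 1 - z ^ 2 := by nlinarith
  set s := Real.sqrt (1 - z ^ 2) with hs
  have hs0 : 0 < s := Real.sqrt_pos.mpr h1z
  rw [LinearIndependent.pair_iff]
  intro a b hab
  have h0 := congrFun hab 0
  have h1 := congrFun hab 1
  have h2 := congrFun hab 2
  have h3 := congrFun hab 3
  simp [Matrix.cons_val_zero, Matrix.cons_val_one] at h0 h1 h2 h3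
  -- h2 : a * (ρ₂ * u) + b * ((s/2) * cos θ) = 0, etc.
  have hpyth := Real.sin_sq_add_cos_sq θ
  have hsne : s ≠ 0 := ne_of_gt hs0
  have ha : a = 0 := by
    by_contra ha
    have hu : u = -(b * s * Real.cos θ) / (2 * ρ₂ * a) := by
      field_simp
      nlinarith [h2]
    have hv : v = -(b * s * Real.sin θ) / (2 * ρ₂ * a) := by
      field_simp
      nlinarith [h3]
    rw [hu, hv] at h0
    field_simp at h0
    have key : 2 * ρ₂ * a * s * (4 * ρ₁ * ρ₂ * a ^ 2 + b ^ 2 * z ^ 2) = 0 := by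
      linear_combination (2 * ρ₂ * a * s) * h0 - 2 * ρ₂ * a * b ^ 2 * s * z ^ 2 * hpyth
    have hne : 2 * ρ₂ * a * s ≠ 0 :=
      mul_ne_zero (mul_ne_zero (mul_ne_zero two_ne_zero hρ₂.ne') ha) hsne
    have h4 : 4 * ρ₁ * ρ₂ * a ^ 2 + b ^ 2 * z ^ 2 = 0 :=
      (mul_eq_zero.mp key).resolve_left hne
    have ha2 : 0 < a ^ 2 := by
      have := abs_pos.mpr ha
      nlinarith [sq_abs a]
    nlinarith [sq_nonneg (b * z), mul_pos (mul_pos hρ₁ hρ₂) ha2]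
  subst ha
  refine ⟨rfl, ?_⟩
  simp at h2 h3
  rcases h2 with h2 | h2 | h2
  · exact h2
  · exact absurd h2 hsne
  · rcases h3 with h3 | h3 | h3
    · exact h3
    · exact absurd h3 hsne
    · nlinarith [hpyth]
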